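/- arXiv:0812.3505 — 8 statements merged into one kernel-verified Lean document; each statement's English description precedes it below -/
import Mathlib

section
/- Fix τ > 0 and let 1 < R₀ < R₀'. If π ∈ (0,1) satisfies 1 − π = (1 + π R₀ τ²)^(−1/τ²) and π' ∈ (0,1) satisfies 1 − π' = (1 + π' R₀' τ²)^(−1/τ²), then π < π'. In words: the probability of a major outbreak is strictly increasing in the basic reproduction number R₀. -/
/-- The probability of a major outbreak is strictly increasing in `R₀` (for fixed
coefficient of variation `τ` of the infectious period). -/
theorem outbreak_probability_increasing_in_R0 (τ R₀ R₀' π π' : ℝ) (hτ : 0 < τ)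
    (hR₀ : 1 < R₀) (hR₀' : R₀ < R₀')
    (hπ : π ∈ Set.Ioo (0 : ℝ) 1) (hπ' : π' ∈ Set.Ioo (0 : ℝ) 1)
    (hbal : 1 - π = (1 + π * R₀ * τ ^ 2) ^ (-(1 / τ ^ 2) : ℝ))
    (hbal' : 1 - π' = (1 + π' * R₀' * τ ^ 2) ^ (-(1 / τ ^ 2) : ℝ)) :
    π < π' := by
  obtain ⟨hπ0, hπ1⟩ := hπ
  obtain ⟨hπ'0, hπ'1⟩ := hπ'
  by_contra h
  push_neg at h  -- h : π' ≤ π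
  set s : ℝ := 1 / τ ^ 2 with hs_def
  have hs : 0 < s := by positivity
  set c : ℝ := R₀' * τ ^ 2 with hc_def
  have hc : 0 < c := by nlinarith [sq_nonneg τ]
  set l : ℝ := π' / π with hl_def
  have hl0 : 0 < l := div_pos hπ'0 hπ0
  have hl1 : l ≤ 1 := (div_le_one hπ0).mpr h
  have hcπ : 0 < c * π := by positivity
  have hbase : (0:ℝ) < 1 + c * π := by linarith
  -- π' * c = l * (c * π)
  have hπ'c : π' * c = l * (c * π) := by
    field_simp [hl_def]
    rw [hl_def, div_mul_cancel₀ _ hπ0.ne']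
  -- Bernoulli: (1 + cπ)^l ≤ 1 + l * (cπ) = 1 + cπ'
  have hbern : (1 + c * π) ^ (l : ℝ) ≤ 1 + π' * c := by
    rw [hπ'c]
    exact rpow_one_add_le_one_add_mul_self (by linarith) hl0.le hl1
  have hbase' : (0:ℝ) < (1 + c * π) ^ (l : ℝ) := Real.rpow_pos_of_pos hbase _
  -- antitone in base for negative exponent
  have step1 : (1 + π' * c) ^ (-s) ≤ ((1 + c * π) ^ (l : ℝ)) ^ (-s) :=
    Real.rpow_le_rpow_of_nonpos hbase' hbern (by linarith)
  have hmul : ((1 + c * π) ^ (l : ℝ)) ^ (-s) = ((1 + c * π) ^ (-s)) ^ (l : ℝ) := by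
    rw [← Real.rpow_mul hbase.le, ← Real.rpow_mul hbase.le, mul_comm]
    ring_nf
  -- weighted AM-GM : x^l ≤ (1-l) + l * x for x ≥ 0
  have hx : (0:ℝ) ≤ (1 + c * π) ^ (-s) := (Real.rpow_pos_of_pos hbase _).le
  have hamgm : ((1 + c * π) ^ (-s)) ^ (l : ℝ) ≤ (1 - l) + l * ((1 + c * π) ^ (-s)) := by
    have := Real.geom_mean_le_arith_mean2_weighted (by linarith : (0:ℝ) ≤ 1 - l) hl0.le
      (zero_le_one) hx (by ring)
    simpa using this
  -- strict comparison at π : (1 + cπ)^(-s) < 1 - π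
  have hstrict : (1 + c * π) ^ (-s) < 1 - π := by
    rw [hbal]
    apply Real.rpow_lt_rpow_of_neg
    · have := mul_pos (mul_pos hπ0 (lt_trans zero_lt_one hR₀)) (pow_pos hτ 2)
      linarith
    · have h1 : π * R₀ * τ ^ 2 < π * R₀' * τ ^ 2 := by
        have := mul_pos hπ0 (pow_pos hτ 2)
        nlinarith
      simp only [hc_def]; nlinarith
    · simp only [neg_neg, Left.neg_neg_iff]; exact hs
  -- combine everything
  have key : 1 - π' < 1 - π' := by
    calc 1 - π' = (1 + π' * R₀' * τ ^ 2) ^ (-s) := hbal'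
    _ = (1 + π' * c) ^ (-s) := by rw [hc_def]; ring_nf
    _ ≤ ((1 + c * π) ^ (-s)) ^ (l : ℝ) := by rw [← hmul]; exact step1
    _ ≤ (1 - l) + l * ((1 + c * π) ^ (-s)) := hamgm
    _ < (1 - l) + l * (1 - π) := by nlinarith
    _ = 1 - π' := by field_simp [hl_def]; rw [hl_def, mul_sub, mul_one, div_mul_cancel₀ _ hπ0.ne']; ring
  exact absurd key (lt_irrefl _)
end

section
/- Fix R₀ > 1 and let 0 < τ < τ'. If π ∈ (0,1) satisfies 1 − π = (1 + π R₀ τ²)^(−1/τ²) and π' ∈ (0,1) satisfies 1 − π' = (1 + π' R₀ τ'²)^(−1/τ'²), then π' < π. In words: the more random the infectious period (the larger its coefficient of variation), the smaller the probability of a major outbreak. -/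
/-- Concavity of `log` through the point `(1, 0)`: weak version. -/
lemma log_chord_le (l y : ℝ) (hl0 : 0 ≤ l) (hl1 : l ≤ 1) (hy : 0 < y) :
    l * Real.log y ≤ Real.log (l * y + (1 - l)) := by
  rcases eq_or_lt_of_le hl0 with h0 | h0
  · simp [← h0]
  rcases eq_or_lt_of_le hl1 with h1 | h1
  · simp [h1]
  rcases eq_or_ne y 1 with hy1 | hy1
  · simp [hy1]
  have := strictConcaveOn_log_Ioi.2 (Set.mem_Ioi.2 hy) (Set.mem_Ioi.2 one_pos)
    hy1 h0 (by linarith : (0:ℝ) < 1 - l) (by ring)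
  simp only [smul_eq_mul, Real.log_one, mul_one] at this
  linarith

/-- Concavity of `log` through the point `(1, 0)`: strict version. -/
lemma log_chord_lt (l y : ℝ) (hl0 : 0 < l) (hl1 : l < 1) (hy : 0 < y) (hy1 : y ≠ 1) :
    l * Real.log y < Real.log (l * y + (1 - l)) := by
  have := strictConcaveOn_log_Ioi.2 (Set.mem_Ioi.2 hy) (Set.mem_Ioi.2 one_pos)
    hy1 hl0 (by linarith : (0:ℝ) < 1 - l) (by ring)
  simp only [smul_eq_mul, Real.log_one, mul_one] at this
  linarith

set_option maxHeartbeats 800000 in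
/-- The probability of a major outbreak is strictly decreasing in the coefficient of
variation `τ` of the infectious period (for fixed `R₀ > 1`). -/
theorem outbreak_probability_decreasing_in_cv (R₀ τ τ' π π' : ℝ) (hR₀ : 1 < R₀)
    (hτ : 0 < τ) (hττ' : τ < τ')
    (hπ : π ∈ Set.Ioo (0 : ℝ) 1) (hπ' : π' ∈ Set.Ioo (0 : ℝ) 1)
    (hbal : 1 - π = (1 + π * R₀ * τ ^ 2) ^ (-(1 / τ ^ 2) : ℝ))
    (hbal' : 1 - π' = (1 + π' * R₀ * τ' ^ 2) ^ (-(1 / τ' ^ 2) : ℝ)) :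
    π' < π := by
  obtain ⟨hπ0, hπ1⟩ := hπ
  obtain ⟨hπ'0, hπ'1⟩ := hπ'
  set t := τ ^ 2 with ht_def
  set t' := τ' ^ 2 with ht'_def
  have ht : 0 < t := by positivity
  have hτ'pos : 0 < τ' := hτ.trans hττ'
  have ht' : 0 < t' := by positivity
  have hR0pos : (0:ℝ) < R₀ := by linarith
  have htt' : t < t' := by
    have := pow_lt_pow_left₀ hττ' hτ.le two_ne_zero
    simpa [ht_def, ht'_def] using this
  have hp1 : (0:ℝ) < π * R₀ * t := mul_pos (mul_pos hπ0 hR0pos) ht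
  have hp2 : (0:ℝ) < π' * R₀ * t' := mul_pos (mul_pos hπ'0 hR0pos) ht'
  have hp3 : (0:ℝ) < π * R₀ * t' := mul_pos (mul_pos hπ0 hR0pos) ht'
  have hb : (0:ℝ) < 1 + π * R₀ * t := by linarith
  have hb' : (0:ℝ) < 1 + π' * R₀ * t' := by linarith
  have hbt' : (0:ℝ) < 1 + π * R₀ * t' := by linarith
  -- log form of the balance equations
  have E1 : t * Real.log (1 - π) + Real.log (1 + π * R₀ * t) = 0 := by
    have h := congrArg Real.log hbal
    rw [Real.log_rpow hb] at h
    have ht0 : t ≠ 0 := ht.ne'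
    field_simp at h
    rw [mul_right_comm π t R₀] at h
    linarith
  have E2 : t' * Real.log (1 - π') + Real.log (1 + π' * R₀ * t') = 0 := by
    have h := congrArg Real.log hbal'
    rw [Real.log_rpow hb'] at h
    have ht0 : t' ≠ 0 := ht'.ne'
    field_simp at h
    rw [mul_right_comm π' t' R₀] at h
    linarith
  -- Step 1: u_{t'}(π) < 0, i.e. t' * log(1-π) + log(1+π R₀ t') < 0
  have hy1 : (1:ℝ) + π * R₀ * t' ≠ 1 := by
    intro h; rw [add_eq_left] at h; linarith
  have hchord := log_chord_lt (t / t') (1 + π * R₀ * t')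
    (by positivity) ((div_lt_one ht').2 htt') hbt' hy1
  have harg : t / t' * (1 + π * R₀ * t') + (1 - t / t') = 1 + π * R₀ * t := by
    field_simp; ring
  rw [harg] at hchord
  have hU : t' * Real.log (1 - π) + Real.log (1 + π * R₀ * t') < 0 := by
    have hc2 : t / t' * Real.log (1 + π * R₀ * t') < -(t * Real.log (1 - π)) := by
      linarith
    have h1 : t * Real.log (1 + π * R₀ * t')
        < (-(t * Real.log (1 - π))) * t' := by
      calc t * Real.log (1 + π * R₀ * t')
          = (t / t' * Real.log (1 + π * R₀ * t')) * t' := by field_simp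
        _ < (-(t * Real.log (1 - π))) * t' := mul_lt_mul_of_pos_right hc2 ht'
    have h2 : t * Real.log (1 + π * R₀ * t')
        < t * ((-Real.log (1 - π)) * t') := by linarith [h1]
    have h3 := lt_of_mul_lt_mul_left h2 ht.le
    linarith
  -- Step 2: suppose π ≤ π', derive u_{t'}(π) ≥ 0
  by_contra hcon
  push_neg at hcon
  have hπ'ne : π' ≠ 0 := hπ'0.ne'
  have hl0 : 0 < π / π' := by positivity
  have hl1 : π / π' ≤ 1 := (div_le_one hπ'0).2 hcon
  have hi : π / π' * Real.log (1 + π' * R₀ * t') ≤ Real.log (1 + π * R₀ * t') := by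
    have harg2 : π / π' * (1 + π' * R₀ * t') + (1 - π / π') = 1 + π * R₀ * t' := by
      field_simp; ring
    have := log_chord_le (π / π') (1 + π' * R₀ * t') hl0.le hl1 hb'
    rwa [harg2] at this
  have hii : π / π' * Real.log (1 - π') ≤ Real.log (1 - π) := by
    have harg3 : π / π' * (1 - π') + (1 - π / π') = 1 - π := by
      field_simp; ring
    have := log_chord_le (π / π') (1 - π') hl0.le hl1 (by linarith)
    rwa [harg3] at this
  have h4 : π / π' * (t' * Real.log (1 - π') + Real.log (1 + π' * R₀ * t')) = 0 := by
    rw [E2, mul_zero]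
  have h5 := mul_le_mul_of_nonneg_left hii ht'.le
  linarith [hU, hi, h4, h5]
end

section
/- Let μ_L, μ_I, τ_L, τ_I > 0 and λ > 0, set R₀ = λ μ_I, and let L and I be independent random variables where L follows the Gamma distribution with shape 1/τ_L² and rate 1/(μ_L τ_L²) and I follows the Gamma distribution with shape 1/τ_I² and rate 1/(μ_I τ_I²). Then for α > 0, the equation λ ∫₀^∞ e^{−α t} P(L < t and t < L + I) dt = 1 holds if and only if α = (R₀/μ_I) · (1 + α τ_L² μ_L)^(−1/τ_L²) · (1 − (1 + α τ_I² μ_I)^(−1/τ_I²)). -/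
open MeasureTheory ProbabilityTheory

section Aux

lemma exp_integral_ab {c a b : ℝ} (hc : 0 < c) :
    ∫ x in a..b, Real.exp (-c * x)
      = Real.exp (-c * a) / c - Real.exp (-c * b) / c := by
  have hderiv : ∀ x ∈ Set.uIcc a b,
      HasDerivAt (fun y => -(Real.exp (-c * y) / c)) (Real.exp (-c * x)) x := by
    intro x _
    have h1 : HasDerivAt (fun y : ℝ => -c * y) (-c) x := by
      simpa using (hasDerivAt_id x).const_mul (-c)
    have h3 := (h1.exp.div_const c).neg
    have e : Real.exp (-c * x) = -(Real.exp (-c * x) * -c / c) := by field_simp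
    rw [e]
    exact h3
  rw [intervalIntegral.integral_eq_sub_of_hasDerivAt hderiv
    ((Continuous.intervalIntegrable (by continuity) a b))]
  ring

lemma lint_exp_Ioo {c a b : ℝ} (hc : 0 < c) (hab : a ≤ b) :
    ∫⁻ t in Set.Ioo a b, ENNReal.ofReal (Real.exp (-c * t))
      = ENNReal.ofReal ((Real.exp (-c * a) - Real.exp (-c * b)) / c) := by
  have hint : IntegrableOn (fun t => Real.exp (-c * t)) (Set.Ioo a b) := by
    apply (Continuous.integrableOn_Ioc (by continuity)).mono_set Set.Ioo_subset_Ioc_self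
  rw [← ofReal_integral_eq_lintegral_ofReal hint
    (Filter.Eventually.of_forall fun x => (Real.exp_pos _).le)]
  rw [← integral_Ioc_eq_integral_Ioo, ← intervalIntegral.integral_of_le hab,
    exp_integral_ab hc]
  congr 1
  ring

lemma measurable_gammaPDF' (a r : ℝ) : Measurable (gammaPDF a r) :=
  (measurable_gammaPDFReal a r).ennreal_ofReal

lemma gamma_laplace {a r c : ℝ} (ha : 0 < a) (hr : 0 < r) (hc : 0 < c) :
    ∫⁻ x, ENNReal.ofReal (Real.exp (-c * x)) ∂(gammaMeasure a r)
      = ENNReal.ofReal ((r / (r + c)) ^ a) := by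
  have hrc : 0 < r + c := by linarith
  rw [gammaMeasure, lintegral_withDensity_eq_lintegral_mul _ (measurable_gammaPDF' a r)
    (by fun_prop)]
  have key : ∀ x : ℝ, (gammaPDF a r * fun x => ENNReal.ofReal (Real.exp (-c * x))) x
      = ENNReal.ofReal ((r / (r + c)) ^ a) * gammaPDF a (r + c) x := by
    intro x
    simp only [Pi.mul_apply, gammaPDF]
    rw [← ENNReal.ofReal_mul (gammaPDFReal_nonneg ha hr x),
      ← ENNReal.ofReal_mul (by positivity)]
    congr 1
    unfold gammaPDFReal
    split_ifs with h
    · rw [Real.div_rpow hr.le hrc.le]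
      rw [show -((r + c) * x) = -(r * x) + -c * x by ring, Real.exp_add]
      have h1 : (0:ℝ) < (r + c) ^ a := Real.rpow_pos_of_pos hrc a
      have h2 : (0:ℝ) < Real.Gamma a := Real.Gamma_pos_of_pos ha
      field_simp
    · simp
  simp_rw [key]
  rw [lintegral_const_mul _ (measurable_gammaPDF' a (r + c)),
    lintegral_gammaPDF_eq_one ha hrc, mul_one]

lemma gamma_ae_pos {Ω : Type*} [MeasureSpace Ω] {a r : ℝ} {X : Ω → ℝ}
    (hX : Measurable X) (hdist : Measure.map X ℙ = gammaMeasure a r) :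
    ∀ᵐ ω, 0 < X ω := by
  have h0 : (ℙ : Measure Ω) {ω | ¬ 0 < X ω} = 0 := by
    have hset : {ω | ¬ 0 < X ω} = X ⁻¹' Set.Iic 0 := by ext ω; simp
    rw [hset, ← Measure.map_apply hX measurableSet_Iic, hdist, gammaMeasure,
      withDensity_apply _ measurableSet_Iic,
      Measure.restrict_congr_set (Iio_ae_eq_Iic (a := (0:ℝ))).symm,
      lintegral_gammaPDF_of_nonpos le_rfl]
  exact (ae_iff).2 h0

end Aux

/-- For independent Gamma distributed latent and infectious periods (means `μ_L`, `μ_I`,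
coefficients of variation `τ_L`, `τ_I`) and `R₀ = λ μ_I`, the Malthusian equation
`λ ∫₀^∞ e^{-α t} P(L < t < L + I) dt = 1` is equivalent to
`α = (R₀/μ_I)(1 + α τ_L² μ_L)^(-1/τ_L²)(1 - (1 + α τ_I² μ_I)^(-1/τ_I²))`. -/
theorem malthusian_equation_gamma {Ω : Type*} [MeasureSpace Ω]
    [IsProbabilityMeasure (ℙ : Measure Ω)]
    (μL μI τL τI lam : ℝ) (hμL : 0 < μL) (hμI : 0 < μI) (hτL : 0 < τL) (hτI : 0 < τI)
    (hlam : 0 < lam) (R₀ : ℝ) (hR₀ : R₀ = lam * μI)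
    (L I : Ω → ℝ) (hL : Measurable L) (hI : Measurable I) (hindep : IndepFun L I)
    (hLdist : Measure.map L ℙ = gammaMeasure (1 / τL ^ 2) (1 / (μL * τL ^ 2)))
    (hIdist : Measure.map I ℙ = gammaMeasure (1 / τI ^ 2) (1 / (μI * τI ^ 2)))
    (α : ℝ) (hα : 0 < α) :
    (lam * ∫ t in Set.Ioi (0 : ℝ),
        Real.exp (-α * t) * (ℙ {ω | L ω < t ∧ t < L ω + I ω}).toReal = 1)
      ↔ α = (R₀ / μI) * (1 + α * τL ^ 2 * μL) ^ (-(1 / τL ^ 2) : ℝ)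
          * (1 - (1 + α * τI ^ 2 * μI) ^ (-(1 / τI ^ 2) : ℝ)) := by
  have haL : (0:ℝ) < 1 / τL ^ 2 := by positivity
  have haI : (0:ℝ) < 1 / τI ^ 2 := by positivity
  have hrL : (0:ℝ) < 1 / (μL * τL ^ 2) := by positivity
  have hrI : (0:ℝ) < 1 / (μI * τI ^ 2) := by positivity
  set rL : ℝ := 1 / (μL * τL ^ 2) with hrLdef
  set rI : ℝ := 1 / (μI * τI ^ 2) with hrIdef
  set A : ℝ := (rL / (rL + α)) ^ ((1:ℝ) / τL ^ 2) with hAdef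
  set B : ℝ := (rI / (rI + α)) ^ ((1:ℝ) / τI ^ 2) with hBdef
  have hApos : 0 < A := Real.rpow_pos_of_pos (by positivity) _
  have hBpos : 0 < B := Real.rpow_pos_of_pos (by positivity) _
  have hBle : B ≤ 1 := by
    apply Real.rpow_le_one (by positivity) _ haI.le
    rw [div_le_one (by linarith)]
    linarith
  -- closed forms
  have hA_eq : A = (1 + α * τL ^ 2 * μL) ^ (-(1 / τL ^ 2) : ℝ) := by
    have h1 : rL / (rL + α) = (1 + α * τL ^ 2 * μL)⁻¹ := by
      rw [hrLdef]
      field_simp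
    rw [hAdef, h1, Real.rpow_neg (by positivity), ← Real.inv_rpow (by positivity)]
  have hB_eq : B = (1 + α * τI ^ 2 * μI) ^ (-(1 / τI ^ 2) : ℝ) := by
    have h1 : rI / (rI + α) = (1 + α * τI ^ 2 * μI)⁻¹ := by
      rw [hrIdef]
      field_simp
    rw [hBdef, h1, Real.rpow_neg (by positivity), ← Real.inv_rpow (by positivity)]
  -- Laplace transforms
  have hKL : ∫⁻ ω, ENNReal.ofReal (Real.exp (-α * L ω)) ∂ℙ = ENNReal.ofReal A := by
    rw [← lintegral_map (f := fun x : ℝ => ENNReal.ofReal (Real.exp (-α * x))) (by fun_prop) hL,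
      hLdist, gamma_laplace haL hrL hα]
  have hKI : ∫⁻ ω, ENNReal.ofReal (Real.exp (-α * I ω)) ∂ℙ = ENNReal.ofReal B := by
    rw [← lintegral_map (f := fun x : ℝ => ENNReal.ofReal (Real.exp (-α * x))) (by fun_prop) hI,
      hIdist, gamma_laplace haI hrI hα]
  have hKLI : ∫⁻ ω, ENNReal.ofReal (Real.exp (-α * (L ω + I ω))) ∂ℙ
      = ENNReal.ofReal A * ENNReal.ofReal B := by
    have heq : ∀ ω, ENNReal.ofReal (Real.exp (-α * (L ω + I ω)))
        = ENNReal.ofReal (Real.exp (-α * L ω)) * ENNReal.ofReal (Real.exp (-α * I ω)) := by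
      intro ω
      rw [← ENNReal.ofReal_mul (Real.exp_pos _).le, ← Real.exp_add]
      ring_nf
    simp_rw [heq]
    have hcomp : IndepFun (fun ω => ENNReal.ofReal (Real.exp (-α * L ω)))
        (fun ω => ENNReal.ofReal (Real.exp (-α * I ω))) ℙ :=
      hindep.comp (φ := fun x : ℝ => ENNReal.ofReal (Real.exp (-α * x)))
        (ψ := fun x : ℝ => ENNReal.ofReal (Real.exp (-α * x))) (by fun_prop) (by fun_prop)
    rw [lintegral_mul_eq_lintegral_mul_lintegral_of_indepFun'' (by fun_prop) (by fun_prop) hcomp,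
      hKL, hKI]
  -- the product-measurable set
  set T : Set (ℝ × Ω) := {p | L p.2 < p.1 ∧ p.1 < L p.2 + I p.2} with hTdef
  have hT : MeasurableSet T := by
    apply MeasurableSet.inter
    · exact measurableSet_lt (hL.comp measurable_snd) measurable_fst
    · exact measurableSet_lt measurable_fst ((hL.comp measurable_snd).add (hI.comp measurable_snd))
  have hSmeas : ∀ t : ℝ, MeasurableSet {ω | L ω < t ∧ t < L ω + I ω} := fun t =>
    (hL measurableSet_Iio).inter ((hL.add hI) measurableSet_Ioi)
  have hprobmeas : Measurable fun t : ℝ => (ℙ : Measure Ω) {ω | L ω < t ∧ t < L ω + I ω} :=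
    measurable_measure_prodMk_left hT
  -- swap integrals
  have hswap : ∫⁻ t in Set.Ioi (0:ℝ),
        ENNReal.ofReal (Real.exp (-α * t)) * ℙ {ω | L ω < t ∧ t < L ω + I ω}
      = ∫⁻ ω, ∫⁻ t in Set.Ioi (0:ℝ),
          (Set.Ioo (L ω) (L ω + I ω)).indicator
            (fun t => ENNReal.ofReal (Real.exp (-α * t))) t ∂ℙ := by
    have h1 : ∀ t : ℝ, ENNReal.ofReal (Real.exp (-α * t)) * ℙ {ω | L ω < t ∧ t < L ω + I ω}
        = ∫⁻ ω, {ω | L ω < t ∧ t < L ω + I ω}.indicator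
            (fun _ => ENNReal.ofReal (Real.exp (-α * t))) ω ∂ℙ := fun t =>
      (lintegral_indicator_const (hSmeas t) _).symm
    simp_rw [h1]
    have hfm : Measurable (fun z : ℝ × Ω => {ω | L ω < z.1 ∧ z.1 < L ω + I ω}.indicator
        (fun _ => ENNReal.ofReal (Real.exp (-α * z.1))) z.2) := by
      have heq : (fun z : ℝ × Ω => {ω | L ω < z.1 ∧ z.1 < L ω + I ω}.indicator
          (fun _ => ENNReal.ofReal (Real.exp (-α * z.1))) z.2)
          = T.indicator (fun z => ENNReal.ofReal (Real.exp (-α * z.1))) := by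
        ext z
        simp only [Set.indicator_apply, Set.mem_setOf_eq, hTdef]
      rw [heq]
      exact Measurable.indicator (by fun_prop) hT
    rw [lintegral_lintegral_swap hfm.aemeasurable]
    refine lintegral_congr fun ω => lintegral_congr fun t => ?_
    simp only [Set.indicator_apply, Set.mem_setOf_eq, Set.mem_Ioo]
  -- a.e. evaluation of inner integral
  have hae : ∀ᵐ ω, (∫⁻ t in Set.Ioi (0:ℝ),
        (Set.Ioo (L ω) (L ω + I ω)).indicator
          (fun t => ENNReal.ofReal (Real.exp (-α * t))) t)
      = (ENNReal.ofReal (Real.exp (-α * L ω))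
          - ENNReal.ofReal (Real.exp (-α * (L ω + I ω)))) * (ENNReal.ofReal α)⁻¹ := by
    filter_upwards [gamma_ae_pos hL hLdist, gamma_ae_pos hI hIdist] with ω hLω hIω
    have hsub : Set.Ioo (L ω) (L ω + I ω) ⊆ Set.Ioi (0:ℝ) :=
      fun x hx => lt_trans hLω hx.1
    rw [lintegral_indicator measurableSet_Ioo _, Measure.restrict_restrict measurableSet_Ioo,
      Set.inter_eq_left.mpr hsub, lint_exp_Ioo hα (by linarith)]
    rw [div_eq_mul_inv, ENNReal.ofReal_mul
      (by
        have : Real.exp (-α * (L ω + I ω)) ≤ Real.exp (-α * L ω) :=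
          Real.exp_le_exp.2 (by nlinarith)
        linarith),
      ENNReal.ofReal_sub _ (Real.exp_pos _).le, ENNReal.ofReal_inv_of_pos hα]
  -- the full Lebesgue integral
  have hΛ : ∫⁻ t in Set.Ioi (0:ℝ),
        ENNReal.ofReal (Real.exp (-α * t)) * ℙ {ω | L ω < t ∧ t < L ω + I ω}
      = ENNReal.ofReal ((A - A * B) / α) := by
    have hαtop : (ENNReal.ofReal α)⁻¹ ≠ ⊤ :=
      ENNReal.inv_ne_top.mpr (ENNReal.ofReal_pos.mpr hα).ne'
    have hfin : ∫⁻ ω, ENNReal.ofReal (Real.exp (-α * (L ω + I ω))) ∂ℙ ≠ ⊤ := by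
      rw [hKLI]
      exact ENNReal.mul_ne_top ENNReal.ofReal_ne_top ENNReal.ofReal_ne_top
    have hle : (fun ω => ENNReal.ofReal (Real.exp (-α * (L ω + I ω))))
        ≤ᵐ[ℙ] fun ω => ENNReal.ofReal (Real.exp (-α * L ω)) := by
      filter_upwards [gamma_ae_pos hI hIdist] with ω hIω
      exact ENNReal.ofReal_le_ofReal (Real.exp_le_exp.2 (by nlinarith))
    rw [hswap, lintegral_congr_ae hae, lintegral_mul_const' _ _ hαtop,
      lintegral_sub (by fun_prop) hfin hle, hKL, hKLI, ← ENNReal.ofReal_mul hApos.le,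
      ← ENNReal.ofReal_sub _ (by positivity), div_eq_mul_inv,
      ENNReal.ofReal_mul (by nlinarith), ENNReal.ofReal_inv_of_pos hα]
  -- convert Bochner integral
  have hJ : ∫ t in Set.Ioi (0:ℝ),
        Real.exp (-α * t) * (ℙ {ω | L ω < t ∧ t < L ω + I ω}).toReal
      = (A - A * B) / α := by
    have hmeas : AEStronglyMeasurable
        (fun t : ℝ => Real.exp (-α * t) * (ℙ {ω | L ω < t ∧ t < L ω + I ω}).toReal)
        (volume.restrict (Set.Ioi (0:ℝ))) :=
      (Measurable.mul (by fun_prop) hprobmeas.ennreal_toReal).aestronglyMeasurable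
    rw [integral_eq_lintegral_of_nonneg_ae
      (Filter.Eventually.of_forall fun t => mul_nonneg (Real.exp_pos _).le ENNReal.toReal_nonneg)
      hmeas]
    have hcongr : ∀ t : ℝ, ENNReal.ofReal (Real.exp (-α * t)
          * (ℙ {ω | L ω < t ∧ t < L ω + I ω}).toReal)
        = ENNReal.ofReal (Real.exp (-α * t)) * ℙ {ω | L ω < t ∧ t < L ω + I ω} := by
      intro t
      rw [ENNReal.ofReal_mul (Real.exp_pos _).le, ENNReal.ofReal_toReal (measure_ne_top _ _)]
    simp_rw [hcongr]
    rw [hΛ, ENNReal.toReal_ofReal (div_nonneg (by nlinarith) hα.le)]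
  rw [hJ, hR₀, mul_div_assoc, div_self hμI.ne', mul_one, ← hA_eq, ← hB_eq]
  rw [show lam * ((A - A * B) / α) = lam * A * (1 - B) / α by ring,
    div_eq_one_iff_eq hα.ne']
  exact eq_comm
end

section
/- Let μ_L, μ_I, τ_L, τ_I > 0 and R₀ > 1. Then there exists a unique α > 0 satisfying α = (R₀/μ_I) · (1 + α τ_L² μ_L)^(−1/τ_L²) · (1 − (1 + α τ_I² μ_I)^(−1/τ_I²)). -/
open Set Filter Real Topology

/-- `u ↦ u ^ (-q)` is strictly convex on `(0, ∞)` for `q > 0`. -/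
lemma rpow_neg_strictConvexOn {q : ℝ} (hq : 0 < q) :
    StrictConvexOn ℝ (Set.Ioi (0:ℝ)) (fun u : ℝ => u ^ (-q)) := by
  apply strictConvexOn_of_deriv2_pos (convex_Ioi 0)
  · intro x hx
    exact (Real.continuousAt_rpow_const x (-q) (Or.inl (ne_of_gt hx))).continuousWithinAt
  · intro x hx
    rw [interior_Ioi] at hx
    have hx0 : (0:ℝ) < x := hx
    have hev : deriv (fun u : ℝ => u ^ (-q)) =ᶠ[𝓝 x] (fun u => -q * u ^ (-q - 1)) := by
      filter_upwards [Ioi_mem_nhds hx0] with u hu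
      exact Real.deriv_rpow_const u (-q)
    have h2 : deriv (deriv (fun u : ℝ => u ^ (-q))) x = -q * ((-q - 1) * x ^ (-q - 1 - 1)) := by
      rw [hev.deriv_eq]
      exact ((Real.hasDerivAt_rpow_const (Or.inl (ne_of_gt hx0))).const_mul (-q)).deriv
    show 0 < deriv (deriv (fun u : ℝ => u ^ (-q))) x
    rw [h2]
    have hX : 0 < x ^ (-q - 1 - 1) := Real.rpow_pos_of_pos hx0 _
    nlinarith [mul_pos hq hX, mul_pos (mul_pos hq hq) hX]

/-- Key concavity inequality for `x ↦ 1 - (1+bx)^(-q)`. -/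
lemma key_concave {q b x y : ℝ} (hq : 0 < q) (hb : 0 < b) (hx : 0 < x) (hxy : x < y) :
    (x / y) * (1 - (1 + b * y) ^ (-q)) < 1 - (1 + b * x) ^ (-q) := by
  have hy : 0 < y := hx.trans hxy
  set t := x / y with ht
  have ht0 : 0 < t := div_pos hx hy
  have ht1 : t < 1 := (div_lt_one hy).2 hxy
  have hby : (0:ℝ) < 1 + b * y := by nlinarith
  have hne : (1:ℝ) ≠ 1 + b * y := by nlinarith
  have hcomb := (rpow_neg_strictConvexOn hq).2 (mem_Ioi.2 one_pos) (mem_Ioi.2 hby) hne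
      (by linarith : (0:ℝ) < 1 - t) ht0 (by ring)
  rw [smul_eq_mul, smul_eq_mul, smul_eq_mul, smul_eq_mul] at hcomb
  have h1 : (1 - t) * 1 + t * (1 + b * y) = 1 + b * x := by
    field_simp [ht]
    rw [ht]; field_simp
    ring
  rw [h1] at hcomb
  simp only [Real.one_rpow] at hcomb
  nlinarith

/-- For `μ_L, μ_I, τ_L, τ_I > 0` and `R₀ > 1` there is a unique `α > 0` solving the
Malthusian balance equation
`α = (R₀/μ_I)(1 + α τ_L² μ_L)^(-1/τ_L²)(1 - (1 + α τ_I² μ_I)^(-1/τ_I²))`. -/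
theorem malthusian_exists_unique (μL μI τL τI R₀ : ℝ)
    (hμL : 0 < μL) (hμI : 0 < μI) (hτL : 0 < τL) (hτI : 0 < τI) (hR₀ : 1 < R₀) :
    ∃! α : ℝ, 0 < α ∧
      α = (R₀ / μI) * (1 + α * τL ^ 2 * μL) ^ (-(1 / τL ^ 2) : ℝ)
          * (1 - (1 + α * τI ^ 2 * μI) ^ (-(1 / τI ^ 2) : ℝ)) := by
  set p : ℝ := 1 / τL ^ 2 with hp_def
  set q : ℝ := 1 / τI ^ 2 with hq_def
  set a : ℝ := τL ^ 2 * μL with ha_def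
  set b : ℝ := τI ^ 2 * μI with hb_def
  have hp : 0 < p := by positivity
  have hq : 0 < q := by positivity
  have ha : 0 < a := by positivity
  have hb : 0 < b := by positivity
  have hqb : q * b = μI := by
    rw [hq_def, hb_def]; field_simp
  set C : ℝ := R₀ / μI with hC_def
  have hC1 : 1 / μI < C := by
    rw [hC_def]; gcongr
  have hC0 : 0 < C := lt_trans (by positivity) hC1
  set B : ℝ → ℝ := fun α => (1 + b * α) ^ (-q) with hBdef
  set g : ℝ → ℝ := fun α => 1 - (1 + b * α) ^ (-q) with hgdef
  set A : ℝ → ℝ := fun α => (1 + a * α) ^ p with hAdef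
  set Φ : ℝ → ℝ := fun α => α * A α / g α with hΦdef
  have hbase : ∀ α : ℝ, 0 < α → (0:ℝ) < 1 + b * α := fun α hα => by nlinarith
  have hAbase : ∀ α : ℝ, 0 ≤ α → (0:ℝ) < 1 + a * α := fun α hα => by nlinarith
  have hApos : ∀ α : ℝ, 0 ≤ α → 0 < A α := fun α hα =>
    Real.rpow_pos_of_pos (hAbase α hα) _
  have hA1 : ∀ α : ℝ, 0 ≤ α → 1 ≤ A α := by
    intro α hα
    have := Real.rpow_le_rpow (le_of_lt one_pos) (by nlinarith : (1:ℝ) ≤ 1 + a * α) hp.le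
    simpa [Real.one_rpow] using this
  have hgpos : ∀ α : ℝ, 0 < α → 0 < g α := by
    intro α hα
    have h1 : (1:ℝ) < 1 + b * α := by nlinarith
    have := Real.rpow_lt_one_of_one_lt_of_neg h1 (by linarith : -q < 0)
    simp only [hgdef]
    linarith
  have hglt1 : ∀ α : ℝ, 0 < α → g α < 1 := by
    intro α hα
    have := Real.rpow_pos_of_pos (hbase α hα) (-q)
    simp only [hgdef]
    linarith
  -- strict monotonicity of Φ on (0, ∞)
  have hmono : ∀ x y : ℝ, 0 < x → x < y → Φ x < Φ y := by
    intro x y hx hxy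
    have hy : 0 < y := hx.trans hxy
    have hgx := hgpos x hx
    have hgy := hgpos y hy
    have hkey := key_concave hq hb hx hxy
    -- x / g x < y / g y
    have h1 : x / g x < y / g y := by
      rw [div_lt_div_iff₀ hgx hgy]
      have e : x * g y = y * (x / y * g y) := by field_simp
      rw [e]
      nlinarith [mul_lt_mul_of_pos_left hkey hy]
    have h2 : A x < A y :=
      Real.rpow_lt_rpow (le_of_lt (hAbase x hx.le)) (by nlinarith) hp
    have hΦx : Φ x = (x / g x) * A x := by simp only [hΦdef]; ring
    have hΦy : Φ y = (y / g y) * A y := by simp only [hΦdef]; ring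
    rw [hΦx, hΦy]
    exact mul_lt_mul'' h1 h2 (le_of_lt (div_pos hx hgx)) (le_of_lt (hApos x hx.le))
  -- equation ↔ Φ α = C, for α > 0
  have hiff : ∀ α : ℝ, 0 < α →
      ((α = (R₀ / μI) * (1 + α * τL ^ 2 * μL) ^ (-(1 / τL ^ 2) : ℝ)
          * (1 - (1 + α * τI ^ 2 * μI) ^ (-(1 / τI ^ 2) : ℝ))) ↔ Φ α = C) := by
    intro α hα
    have e1 : (1 + α * τL ^ 2 * μL : ℝ) = 1 + a * α := by rw [ha_def]; ring
    have e2 : (1 + α * τI ^ 2 * μI : ℝ) = 1 + b * α := by rw [hb_def]; ring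
    have e3 : (-(1 / τL ^ 2) : ℝ) = -p := by rw [hp_def]
    have e4 : (-(1 / τI ^ 2) : ℝ) = -q := by rw [hq_def]
    have e5 : (R₀ / μI : ℝ) = C := by rw [hC_def]
    have hAα := hApos α hα.le
    have hgα := hgpos α hα
    have hrw : (1 + a * α) ^ (-p : ℝ) = (A α)⁻¹ := by
      rw [hAdef]
      exact Real.rpow_neg (le_of_lt (hAbase α hα.le)) p
    rw [e1, e2, e3, e4, e5, hrw]
    have hgg : (1 - (1 + b * α) ^ (-q) : ℝ) = g α := by rw [hgdef]
    rw [hgg]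
    simp only [hΦdef]
    rw [div_eq_iff (ne_of_gt hgα)]
    rw [show C * (A α)⁻¹ * g α = C * g α / A α from by ring]
    rw [eq_div_iff (ne_of_gt hAα)]
  -- limit of Φ at 0⁺ is 1/μI
  have hd1 : HasDerivAt (fun α : ℝ => 1 + b * α) b 0 := by
    simpa using ((hasDerivAt_id (0:ℝ)).const_mul b).const_add 1
  have hd2 : HasDerivAt (fun u : ℝ => u ^ (-q)) (-q * (1 + b * 0) ^ (-q - 1)) (1 + b * 0) :=
    Real.hasDerivAt_rpow_const (Or.inl (by norm_num))
  have hd3 : HasDerivAt (fun α : ℝ => (1 + b * α) ^ (-q)) (-q * b) 0 := by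
    have := hd2.comp 0 hd1
    simpa [Function.comp_def, Real.one_rpow] using this
  have hd4 : HasDerivAt g (μI) 0 := by
    have := hd3.const_sub 1
    rw [← hqb]
    simpa [hgdef, neg_mul] using this
  have hslope : Tendsto (slope g 0) (𝓝[>] 0) (𝓝 μI) :=
    (hasDerivAt_iff_tendsto_slope.1 hd4).mono_left
      (nhdsWithin_mono 0 (fun x hx => ne_of_gt hx))
  have hinv : Tendsto (fun α => (slope g 0 α)⁻¹) (𝓝[>] 0) (𝓝 μI⁻¹) :=
    hslope.inv₀ (ne_of_gt hμI)
  have hg0 : g 0 = 0 := by simp [hgdef, Real.one_rpow]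
  have hslope_eq : (fun α => (slope g 0 α)⁻¹) =ᶠ[𝓝[>] (0:ℝ)] (fun α => α / g α) := by
    filter_upwards [self_mem_nhdsWithin] with α (hα : 0 < α)
    rw [slope_def_field, hg0]
    rw [inv_div]
    simp
  have htend1 : Tendsto (fun α => α / g α) (𝓝[>] 0) (𝓝 μI⁻¹) := hinv.congr' hslope_eq
  have hcA : ContinuousAt A 0 := by
    apply ContinuousAt.rpow_const
    · fun_prop
    · exact Or.inl (by norm_num)
  have htendA : Tendsto A (𝓝[>] 0) (𝓝 1) := by
    have h0 : A 0 = 1 := by simp [hAdef, Real.one_rpow]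
    have h := hcA.tendsto.mono_left (nhdsWithin_le_nhds : 𝓝[>] (0:ℝ) ≤ 𝓝 0)
    rwa [h0] at h
  have hΦtend : Tendsto Φ (𝓝[>] 0) (𝓝 (1 / μI)) := by
    have h := htendA.mul htend1
    have heq : (fun α => A α * (α / g α)) = Φ := by
      funext α; simp only [hΦdef]; ring
    rw [heq] at h
    simpa [one_div] using h
  have hev : ∀ᶠ α in 𝓝[>] (0:ℝ), Φ α < C := hΦtend.eventually_lt_const hC1
  obtain ⟨x, hxlt, hx0⟩ := (hev.and self_mem_nhdsWithin).exists
  have hx0 : 0 < x := hx0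
  -- a large point where Φ exceeds C
  obtain ⟨y, hxy, hCy⟩ : ∃ y : ℝ, x < y ∧ C < y :=
    ⟨max x C + 1, lt_of_le_of_lt (le_max_left x C) (by linarith),
      lt_of_le_of_lt (le_max_right x C) (by linarith)⟩
  have hy0 : 0 < y := hx0.trans hxy
  have hΦy : C < Φ y := by
    have hgy := hgpos y hy0
    have hgy1 := hglt1 y hy0
    have hAy := hA1 y hy0.le
    have hyA : 0 < y * A y := mul_pos hy0 (hApos y hy0.le)
    have h1 : y ≤ y * A y := le_mul_of_one_le_right hy0.le hAy
    have h2 : y * A y ≤ y * A y / g y := by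
      rw [le_div_iff₀ hgy]
      calc y * A y * g y ≤ y * A y * 1 := mul_le_mul_of_nonneg_left hgy1.le hyA.le
        _ = y * A y := mul_one _
    have h3 : Φ y = y * A y / g y := by rw [hΦdef]
    rw [h3]
    exact lt_of_lt_of_le hCy (le_trans h1 h2)
  -- continuity on [x,y]
  have hsub : Icc x y ⊆ Ioi 0 := fun z hz => lt_of_lt_of_le hx0 hz.1
  have hcont : ContinuousOn Φ (Icc x y) := by
    apply ContinuousOn.div
    · apply ContinuousOn.mul continuousOn_id
      apply ContinuousOn.rpow_const (by fun_prop)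
      intro z hz
      exact Or.inr hp.le
    · apply ContinuousOn.sub continuousOn_const
      apply ContinuousOn.rpow_const (by fun_prop)
      intro z hz
      exact Or.inl (ne_of_gt (hbase z (hsub hz)))
    · intro z hz
      exact ne_of_gt (hgpos z (hsub hz))
  have hmem : C ∈ Icc (Φ x) (Φ y) := ⟨hxlt.le, hΦy.le⟩
  obtain ⟨α, hαmem, hΦα⟩ := intermediate_value_Icc hxy.le hcont hmem
  have hα0 : 0 < α := hsub hαmem
  refine ⟨α, ⟨hα0, (hiff α hα0).2 hΦα⟩, ?_⟩
  rintro β ⟨hβ0, hβeq⟩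
  have hΦβ : Φ β = C := (hiff β hβ0).1 hβeq
  rcases lt_trichotomy β α with h | h | h
  · exfalso; have := hmono β α hβ0 h; rw [hΦβ, hΦα] at this; exact lt_irrefl _ this
  · exact h
  · exfalso; have := hmono α β hα0 h; rw [hΦβ, hΦα] at this; exact lt_irrefl _ this
end

section
/- Let μ_I, τ_L, τ_I > 0 and R₀ > 0 be fixed, and let 0 < μ_L < μ_L'. If α > 0 satisfies α = (R₀/μ_I)(1 + α τ_L² μ_L)^(−1/τ_L²)(1 − (1 + α τ_I² μ_I)^(−1/τ_I²)) and α' > 0 satisfies the same equation with μ_L replaced by μ_L', then α' < α. In words: keeping R₀ fixed, the initial exponential growth rate is strictly decreasing in the mean latent period μ_L. -/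
open Real

/-- Convexity-type inequality for `x ↦ x ^ (-s)` between `1` and `y`, proved via two
applications of weighted AM-GM. -/
lemma rpow_neg_convex_aux (s t y : ℝ) (hs : 0 ≤ s) (ht : 0 ≤ t) (ht1 : t ≤ 1) (hy : 1 ≤ y) :
    ((1 - t) + t * y) ^ (-s) ≤ (1 - t) + t * y ^ (-s) := by
  have hy0 : (0:ℝ) < y := lt_of_lt_of_le one_pos hy
  have h1 : y ^ t ≤ (1 - t) + t * y := by
    have := Real.geom_mean_le_arith_mean2_weighted (by linarith : (0:ℝ) ≤ 1 - t) ht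
      (le_of_lt one_pos) hy0.le (by ring)
    simpa using this
  have hyt : 0 < y ^ t := Real.rpow_pos_of_pos hy0 t
  have h2 : ((1 - t) + t * y) ^ (-s) ≤ (y ^ t) ^ (-s) :=
    Real.rpow_le_rpow_of_nonpos hyt h1 (by linarith)
  have h3 : (y ^ t) ^ (-s) = (y ^ (-s)) ^ t := by
    rw [← Real.rpow_mul hy0.le, ← Real.rpow_mul hy0.le, mul_comm]
  have hys : 0 ≤ y ^ (-s) := (Real.rpow_pos_of_pos hy0 _).le
  have h4 : (y ^ (-s)) ^ t ≤ (1 - t) + t * y ^ (-s) := by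
    have := Real.geom_mean_le_arith_mean2_weighted (by linarith : (0:ℝ) ≤ 1 - t) ht
      (le_of_lt one_pos) hys (by ring)
    simpa using this
  calc ((1 - t) + t * y) ^ (-s) ≤ (y ^ t) ^ (-s) := h2
    _ = (y ^ (-s)) ^ t := h3
    _ ≤ (1 - t) + t * y ^ (-s) := h4

/-- For `c, s > 0` and `0 < a ≤ b`, `a * (1 - (1+cb)^(-s)) ≤ b * (1 - (1+ca)^(-s))`,
i.e. `a ↦ a / (1 - (1+ca)^(-s))` is nondecreasing. -/
lemma keyQ (c s a b : ℝ) (hc : 0 < c) (hs : 0 < s) (ha : 0 < a) (hab : a ≤ b) :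
    a * (1 - (1 + c * b) ^ (-s)) ≤ b * (1 - (1 + c * a) ^ (-s)) := by
  have hb : 0 < b := lt_of_lt_of_le ha hab
  have ht : 0 ≤ a / b := by positivity
  have ht1 : a / b ≤ 1 := (div_le_one hb).mpr hab
  have hy : (1:ℝ) ≤ 1 + c * b := by nlinarith
  have key := rpow_neg_convex_aux s (a / b) (1 + c * b) hs.le ht ht1 hy
  have heq : (1 - a / b) + (a / b) * (1 + c * b) = 1 + c * a := by
    field_simp; ring
  rw [heq] at key
  -- key : (1 + c*a)^(-s) ≤ (1 - a/b) + (a/b) * (1 + c*b)^(-s)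
  have hmul := mul_le_mul_of_nonneg_left key hb.le
  have haux1 : b * (1 - a / b) = b - a := by field_simp
  have haux2 : b * (a / b) = a := by field_simp
  nlinarith [hmul, haux1, haux2, mul_le_mul_of_nonneg_right haux2.le
    ((Real.rpow_pos_of_pos (by nlinarith : (0:ℝ) < 1 + c * b) (-s)).le)]

/-- Keeping `R₀` fixed, the initial exponential growth rate `α` is strictly decreasing
in the mean latent period `μ_L`. -/
theorem growth_rate_decreasing_in_mean_latent (μI τL τI R₀ μL μL' α α' : ℝ)
    (hμI : 0 < μI) (hτL : 0 < τL) (hτI : 0 < τI) (hR₀ : 0 < R₀)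
    (hμL : 0 < μL) (hμL' : μL < μL') (hα : 0 < α) (hα' : 0 < α')
    (hbal : α = (R₀ / μI) * (1 + α * τL ^ 2 * μL) ^ (-(1 / τL ^ 2) : ℝ)
        * (1 - (1 + α * τI ^ 2 * μI) ^ (-(1 / τI ^ 2) : ℝ)))
    (hbal' : α' = (R₀ / μI) * (1 + α' * τL ^ 2 * μL') ^ (-(1 / τL ^ 2) : ℝ)
        * (1 - (1 + α' * τI ^ 2 * μI) ^ (-(1 / τI ^ 2) : ℝ))) :
    α' < α := by
  by_contra hcon
  push_neg at hcon  -- hcon : α ≤ α'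
  have hτL2 : 0 < τL ^ 2 := by positivity
  have hτI2 : 0 < τI ^ 2 := by positivity
  set sL : ℝ := -(1 / τL ^ 2) with hsL
  set sI : ℝ := -(1 / τI ^ 2) with hsI
  have hsLneg : sL < 0 := neg_lt_zero.mpr (by positivity)
  have hsIneg : sI < 0 := neg_lt_zero.mpr (by positivity)
  set BL : ℝ := 1 + α * τL ^ 2 * μL with hBLdef
  set BL' : ℝ := 1 + α' * τL ^ 2 * μL' with hBL'def
  have hBL : 1 < BL := by
    have : 0 < α * τL ^ 2 * μL := by positivity
    simp [hBLdef]; linarith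
  have hBLlt : BL < BL' := by
    have h1 : α * τL ^ 2 * μL < α' * τL ^ 2 * μL' := by
      have hApos : 0 < α * τL ^ 2 := by positivity
      have hstep1 : α * τL ^ 2 * μL < α * τL ^ 2 * μL' :=
        mul_lt_mul_of_pos_left hμL' hApos
      have hstep2 : α * τL ^ 2 * μL' ≤ α' * τL ^ 2 * μL' :=
        mul_le_mul_of_nonneg_right (mul_le_mul_of_nonneg_right hcon hτL2.le)
          (le_of_lt (hμL.trans hμL'))
      linarith
    simp only [hBLdef, hBL'def]; linarith
  have hP : (0:ℝ) < BL ^ sL := Real.rpow_pos_of_pos (by linarith) _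
  have hPlt : BL' ^ sL < BL ^ sL :=
    Real.rpow_lt_rpow_of_neg (by linarith) hBLlt hsLneg
  set QA : ℝ := 1 - (1 + α * τI ^ 2 * μI) ^ sI with hQAdef
  set QA' : ℝ := 1 - (1 + α' * τI ^ 2 * μI) ^ sI with hQA'def
  have hQA : 0 < QA := by
    have : (1 + α * τI ^ 2 * μI) ^ sI < 1 :=
      Real.rpow_lt_one_of_one_lt_of_neg
        (by nlinarith [mul_pos (mul_pos hα hτI2) hμI]) hsIneg
    simp only [hQAdef]; linarith
  have hQA' : 0 < QA' := by
    have : (1 + α' * τI ^ 2 * μI) ^ sI < 1 :=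
      Real.rpow_lt_one_of_one_lt_of_neg
        (by nlinarith [mul_pos (mul_pos hα' hτI2) hμI]) hsIneg
    simp only [hQA'def]; linarith
  -- the slope inequality : α * QA' ≤ α' * QA
  have hkey : α * QA' ≤ α' * QA := by
    have hk := keyQ (τI ^ 2 * μI) (1 / τI ^ 2) α α' (by positivity) (by positivity) hα hcon
    have e1 : 1 + τI ^ 2 * μI * α' = 1 + α' * τI ^ 2 * μI := by ring
    have e2 : 1 + τI ^ 2 * μI * α = 1 + α * τI ^ 2 * μI := by ring
    rw [e1, e2] at hk
    simpa [hQAdef, hQA'def, hsI] using hk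
  -- the cross relation from the two balance equations
  have hcross : α * BL' ^ sL * QA' = α' * BL ^ sL * QA := by
    conv_lhs => rw [hbal]
    conv_rhs => rw [hbal']
    ring
  -- but the left side is strictly smaller
  have hlt : α * BL' ^ sL * QA' < α' * BL ^ sL * QA := by
    have hP'pos : (0:ℝ) < BL' ^ sL := Real.rpow_pos_of_pos (by linarith) _
    calc α * BL' ^ sL * QA' = (α * QA') * BL' ^ sL := by ring
      _ ≤ (α' * QA) * BL' ^ sL := mul_le_mul_of_nonneg_right hkey hP'pos.le
      _ < (α' * QA) * BL ^ sL := by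
          exact mul_lt_mul_of_pos_left hPlt (by positivity)
      _ = α' * BL ^ sL * QA := by ring
  exact absurd hcross (ne_of_lt hlt)
end

section
/- Let μ_L, τ_L, τ_I > 0 and R₀ > 0 be fixed, and let 0 < μ_I < μ_I'. If α > 0 satisfies α = (R₀/μ_I)(1 + α τ_L² μ_L)^(−1/τ_L²)(1 − (1 + α τ_I² μ_I)^(−1/τ_I²)) and α' > 0 satisfies the same equation with μ_I replaced by μ_I', then α' < α. In words: keeping R₀ fixed (so that the contact rate λ = R₀/μ_I changes with μ_I), the initial exponential growth rate is strictly decreasing in the mean infectious period μ_I. -/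
open Real Set

/-- Key inequality: `s·x·(1+x)^(-s-1) < 1 - (1+x)^(-s)` for `s, x > 0`. -/
lemma key_ineq (s x : ℝ) (hs : 0 < s) (hx : 0 < x) :
    s * x * (1 + x) ^ (-s - 1 : ℝ) < 1 - (1 + x) ^ (-s : ℝ) := by
  have h1 : (0:ℝ) < 1 + x := by linarith
  have hlog : x / (1 + x) ≤ Real.log (1 + x) := by
    have h0 := Real.log_le_sub_one_of_pos (x := (1 + x)⁻¹) (by positivity)
    rw [Real.log_inv] at h0
    have h2 : (1 + x)⁻¹ - 1 = -(x / (1 + x)) := by field_simp; ring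
    rw [h2] at h0; linarith
  have hexp : 1 + s * x / (1 + x) < (1 + x) ^ (s : ℝ) := by
    rw [Real.rpow_def_of_pos h1, mul_comm (Real.log (1 + x)) s]
    have h3 : s * (x / (1 + x)) + 1 < Real.exp (s * (x / (1 + x))) :=
      Real.add_one_lt_exp (by positivity)
    have h4 : Real.exp (s * (x / (1 + x))) ≤ Real.exp (s * Real.log (1 + x)) :=
      Real.exp_le_exp.mpr (mul_le_mul_of_nonneg_left hlog hs.le)
    have h5 : s * (x / (1 + x)) = s * x / (1 + x) := by ring
    linarith [h5 ▸ h3]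
  set A : ℝ := (1 + x) ^ (s : ℝ) with hAdef
  have hApos : 0 < A := Real.rpow_pos_of_pos h1 s
  have hneg : (1 + x) ^ (-s : ℝ) = A⁻¹ := by rw [hAdef, Real.rpow_neg h1.le]
  have hneg1 : (1 + x) ^ (-s - 1 : ℝ) = A⁻¹ * (1 + x)⁻¹ := by
    rw [show (-s - 1 : ℝ) = -s + (-1) by ring, Real.rpow_add h1, Real.rpow_neg_one, hneg]
  rw [hneg, hneg1]
  have key : s * x / (1 + x) < A - 1 := by linarith
  have hlt : (s * x / (1 + x)) * A⁻¹ < (A - 1) * A⁻¹ :=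
    mul_lt_mul_of_pos_right key (by positivity)
  have hAne : A ≠ 0 := hApos.ne'
  calc s * x * (A⁻¹ * (1 + x)⁻¹) = (s * x / (1 + x)) * A⁻¹ := by ring
    _ < (A - 1) * A⁻¹ := hlt
    _ = 1 - A⁻¹ := by field_simp

/-- `x ↦ (1 - (1+x)^(-s))/x` is strictly decreasing on `(0, ∞)`. -/
lemma strictAntiOn_aux (s : ℝ) (hs : 0 < s) :
    StrictAntiOn (fun x : ℝ => (1 - (1 + x) ^ (-s : ℝ)) / x) (Ioi 0) := by
  have hderiv : ∀ x ∈ Ioi (0:ℝ), HasDerivAt (fun x : ℝ => (1 - (1 + x) ^ (-s : ℝ)) / x)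
      ((s * (1 + x) ^ (-s - 1 : ℝ) * x - (1 - (1 + x) ^ (-s : ℝ)) * 1) / x ^ 2) x := by
    intro x hx
    have hx0 : (0:ℝ) < x := hx
    have h1 : (0:ℝ) < 1 + x := by linarith
    have hbase : HasDerivAt (fun x : ℝ => 1 + x) 1 x := by
      simpa using (hasDerivAt_id x).const_add 1
    have hpow : HasDerivAt (fun x : ℝ => (1 + x) ^ (-s : ℝ))
        (-s * (1 + x) ^ (-s - 1 : ℝ) * 1) x :=
      (Real.hasDerivAt_rpow_const (p := -s) (Or.inl h1.ne')).comp x hbase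
    have hnum : HasDerivAt (fun x : ℝ => 1 - (1 + x) ^ (-s : ℝ))
        (s * (1 + x) ^ (-s - 1 : ℝ)) x := by
      have h2 := hpow.const_sub 1
      rw [show s * (1 + x) ^ (-s - 1 : ℝ) = -(-s * (1 + x) ^ (-s - 1 : ℝ) * 1) by ring]; exact h2
    have h3 := hnum.div (hasDerivAt_id x) hx0.ne'
    exact h3
  apply strictAntiOn_of_deriv_neg (convex_Ioi 0)
  · exact fun x hx => ((hderiv x hx).continuousAt).continuousWithinAt
  · intro x hx
    rw [interior_Ioi] at hx
    have hx0 : (0:ℝ) < x := hx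
    rw [(hderiv x hx).deriv]
    have hk := key_ineq s x hs hx0
    have hnum : s * (1 + x) ^ (-s - 1 : ℝ) * x - (1 - (1 + x) ^ (-s : ℝ)) * 1 < 0 := by
      nlinarith
    exact div_neg_of_neg_of_pos hnum (by positivity)

/-- Keeping `R₀` fixed (so the contact rate `λ = R₀/μ_I` changes with `μ_I`), the initial
exponential growth rate `α` is strictly decreasing in the mean infectious period `μ_I`. -/
theorem growth_rate_decreasing_in_mean_infectious (μL τL τI R₀ μI μI' α α' : ℝ)
    (hμL : 0 < μL) (hτL : 0 < τL) (hτI : 0 < τI) (hR₀ : 0 < R₀)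
    (hμI : 0 < μI) (hμI' : μI < μI') (hα : 0 < α) (hα' : 0 < α')
    (hbal : α = (R₀ / μI) * (1 + α * τL ^ 2 * μL) ^ (-(1 / τL ^ 2) : ℝ)
        * (1 - (1 + α * τI ^ 2 * μI) ^ (-(1 / τI ^ 2) : ℝ)))
    (hbal' : α' = (R₀ / μI') * (1 + α' * τL ^ 2 * μL) ^ (-(1 / τL ^ 2) : ℝ)
        * (1 - (1 + α' * τI ^ 2 * μI') ^ (-(1 / τI ^ 2) : ℝ))) :
    α' < α := by
  by_contra hle
  push_neg at hle  -- α ≤ α'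
  have hμI'0 : 0 < μI' := hμI.trans hμI'
  set s : ℝ := 1 / τI ^ 2 with hsdef
  have hs : 0 < s := by rw [hsdef]; positivity
  set AL : ℝ := (1 + α * τL ^ 2 * μL) ^ (-(1 / τL ^ 2) : ℝ) with hALdef
  set AL' : ℝ := (1 + α' * τL ^ 2 * μL) ^ (-(1 / τL ^ 2) : ℝ) with hAL'def
  set B : ℝ := 1 - (1 + α * τI ^ 2 * μI) ^ (-s : ℝ) with hBdef
  set B' : ℝ := 1 - (1 + α' * τI ^ 2 * μI') ^ (-s : ℝ) with hB'def
  have hALpos : 0 < AL := by rw [hALdef]; exact Real.rpow_pos_of_pos (by positivity) _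
  have hAL'pos : 0 < AL' := by rw [hAL'def]; exact Real.rpow_pos_of_pos (by positivity) _
  have hALle : AL' ≤ AL := by
    rw [hALdef, hAL'def]
    apply Real.rpow_le_rpow_of_nonpos (by positivity)
    · nlinarith [mul_le_mul_of_nonneg_right hle (by positivity : (0:ℝ) ≤ τL ^ 2 * μL)]
    · have h9 : (0:ℝ) < 1 / τL ^ 2 := by positivity
      linarith
  have hx : (0:ℝ) < α * τI ^ 2 * μI := by positivity
  have hx' : (0:ℝ) < α' * τI ^ 2 * μI' := by positivity
  have heq : R₀ * AL * B = α * μI := by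
    rw [hbal]; field_simp
  have heq' : R₀ * AL' * B' = α' * μI' := by
    rw [hbal']; field_simp
  have e1 : R₀ * AL * (B / (α * τI ^ 2 * μI)) = s := by
    have h9 : R₀ * AL * (B / (α * τI ^ 2 * μI)) = (R₀ * AL * B) / (α * τI ^ 2 * μI) := by
      ring
    rw [h9, heq, hsdef, div_eq_div_iff (by positivity) (by positivity)]
    ring
  have e1' : R₀ * AL' * (B' / (α' * τI ^ 2 * μI')) = s := by
    have h9 : R₀ * AL' * (B' / (α' * τI ^ 2 * μI')) = (R₀ * AL' * B') / (α' * τI ^ 2 * μI') := by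
      ring
    rw [h9, heq', hsdef, div_eq_div_iff (by positivity) (by positivity)]
    ring
  have hargs : α * τI ^ 2 * μI < α' * τI ^ 2 * μI' := by
    have h9 : α * τI ^ 2 * μI ≤ α' * τI ^ 2 * μI :=
      mul_le_mul_of_nonneg_right (mul_le_mul_of_nonneg_right hle (by positivity)) hμI.le
    have h10 : α' * τI ^ 2 * μI < α' * τI ^ 2 * μI' :=
      mul_lt_mul_of_pos_left hμI' (by positivity)
    linarith
  have hhlt : B' / (α' * τI ^ 2 * μI') < B / (α * τI ^ 2 * μI) := by
    have := strictAntiOn_aux s hs hx hx' hargs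
    simpa [← hBdef, ← hB'def] using this
  have hB'pos : 0 < B' := by
    rw [hB'def]
    have h9 : (1 + α' * τI ^ 2 * μI') ^ (-s : ℝ) < 1 :=
      Real.rpow_lt_one_of_one_lt_of_neg (by nlinarith) (by linarith)
    linarith
  have hu'pos : 0 < B' / (α' * τI ^ 2 * μI') := div_pos hB'pos hx'
  have c1 : R₀ * AL' * (B' / (α' * τI ^ 2 * μI')) ≤ R₀ * AL * (B' / (α' * τI ^ 2 * μI')) :=
    mul_le_mul_of_nonneg_right (mul_le_mul_of_nonneg_left hALle hR₀.le) hu'pos.le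
  have c2 : R₀ * AL * (B' / (α' * τI ^ 2 * μI')) < R₀ * AL * (B / (α * τI ^ 2 * μI)) :=
    mul_lt_mul_of_pos_left hhlt (mul_pos hR₀ hALpos)
  linarith [e1, e1', c1, c2]
end

section
/- Let μ_L, μ_I, τ_I > 0 and R₀ > 0 be fixed, and let 0 < τ_L < τ_L'. If α > 0 satisfies α = (R₀/μ_I)(1 + α τ_L² μ_L)^(−1/τ_L²)(1 − (1 + α τ_I² μ_I)^(−1/τ_I²)) and α' > 0 satisfies the same equation with τ_L replaced by τ_L', then α < α'. In words: the initial exponential growth rate is strictly increasing in the coefficient of variation τ_L of the latent period — a more random latent period increases the growth rate. -/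
open Real

-- chord lemma for log(1+·): for 0<x<y, (x/y)·log(1+y) < log(1+x)
lemma chordlog {x y : ℝ} (hx : 0 < x) (hxy : x < y) :
    x / y * Real.log (1 + y) < Real.log (1 + x) := by
  have hy : 0 < y := hx.trans hxy
  have h1 : (1 : ℝ) ∈ Set.Ioi (0:ℝ) := by norm_num
  have h2 : (1 + y) ∈ Set.Ioi (0:ℝ) := by simp; linarith
  have hne : (1:ℝ) ≠ 1 + y := by linarith
  have ha : 0 < 1 - x / y := by
    rw [sub_pos]; exact (div_lt_one hy).2 hxy
  have hb : 0 < x / y := div_pos hx hy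
  have hsum : (1 - x/y) + x/y = 1 := by ring
  have := strictConcaveOn_log_Ioi.2 h1 h2 hne ha hb hsum
  have hxy' : (1 - x/y) • (1:ℝ) + (x/y) • (1 + y) = 1 + x := by
    field_simp
    simp only [smul_eq_mul]; rw [div_mul_eq_mul_div, div_mul_eq_mul_div, ← add_div, div_eq_iff hy.ne']; ring
  rw [hxy', Real.log_one] at this
  simpa using this

-- convexity chord for (1+t)^(-s): for 0<t<t', (1+t)^(-s) < (t/t')·(1+t')^(-s) + (1 - t/t')
lemma chordpow {t t' s : ℝ} (ht : 0 < t) (htt : t < t') (hs : 0 < s) :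
    (1 + t) ^ (-s) < t / t' * (1 + t') ^ (-s) + (1 - t / t') := by
  have ht' : 0 < t' := ht.trans htt
  have hb : (0:ℝ) < 1 + t := by linarith
  have hb' : (0:ℝ) < 1 + t' := by linarith
  have hlog := chordlog ht htt
  have key : -s * Real.log (1 + t) < (t/t') * (-s * Real.log (1 + t')) + (1 - t/t') * 0 := by
    nlinarith [chordlog ht htt]
  have h1 : (1 + t) ^ (-s) = Real.exp (-s * Real.log (1 + t)) := by
    rw [Real.rpow_def_of_pos hb]; ring_nf
  have h2 : (1 + t') ^ (-s) = Real.exp (-s * Real.log (1 + t')) := by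
    rw [Real.rpow_def_of_pos hb']; ring_nf
  have hstep : Real.exp (-s * Real.log (1 + t)) <
      Real.exp ((t/t') * (-s * Real.log (1 + t')) + (1 - t/t') * 0) :=
    Real.exp_lt_exp.2 key
  have ha0 : (0:ℝ) ≤ t/t' := le_of_lt (div_pos ht ht')
  have hb0 : (0:ℝ) ≤ 1 - t/t' := by rw [sub_nonneg]; exact le_of_lt ((div_lt_one ht').2 htt)
  have hab : t/t' + (1 - t/t') = 1 := by ring
  have hconv : Real.exp (t/t' * (-s * Real.log (1 + t')) + (1 - t/t') * 0) ≤
      t/t' * Real.exp (-s * Real.log (1 + t')) + (1 - t/t') * Real.exp 0 :=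
    convexOn_exp.2 (Set.mem_univ _) (Set.mem_univ _) ha0 hb0 hab
  rw [Real.exp_zero] at hconv
  rw [h1, h2]
  calc Real.exp (-s * Real.log (1 + t)) < _ := hstep
    _ ≤ t/t' * Real.exp (-s * Real.log (1 + t')) + (1 - t/t') * 1 := hconv
    _ = t/t' * Real.exp (-s * Real.log (1 + t')) + (1 - t/t') := by ring

-- Q(a) = 1 - (1+c·a)^(-s) is positive for a>0
lemma Qpos {c s a : ℝ} (hc : 0 < c) (hs : 0 < s) (ha : 0 < a) :
    0 < 1 - (1 + a * c) ^ (-s) := by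
  have : (1 + a * c) ^ (-s) < 1 :=
    Real.rpow_lt_one_of_one_lt_of_neg (by nlinarith) (by linarith)
  linarith

-- star-shape: for 0<x≤y, x·Q(y) ≤ y·Q(x)
lemma Qstar {c s x y : ℝ} (hc : 0 < c) (hs : 0 < s) (hx : 0 < x) (hxy : x ≤ y) :
    x * (1 - (1 + y * c) ^ (-s)) ≤ y * (1 - (1 + x * c) ^ (-s)) := by
  rcases eq_or_lt_of_le hxy with h | h
  · subst h; exact le_rfl
  · have hy : 0 < y := hx.trans h
    have hcp := chordpow (t := x*c) (t' := y*c) (by positivity) (by nlinarith) hs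
    have hratio : x*c/(y*c) = x/y := by
      rw [mul_div_mul_right _ _ (ne_of_gt hc)]
    rw [hratio] at hcp
    have hmul := mul_lt_mul_of_pos_left hcp hy
    have heq : y * (x/y * (1 + y*c) ^ (-s) + (1 - x/y)) =
        x * (1 + y*c) ^ (-s) + y - x := by
      field_simp
      ring
    rw [heq] at hmul
    linarith

-- P strictly increasing in τ: for a>0, 0<τ<τ', (1+a τ² μL)^(-1/τ²) < (1+a τ'² μL)^(-1/τ'²)
lemma Pmono {a μL τ τ' : ℝ} (ha : 0 < a) (hμL : 0 < μL) (hτ : 0 < τ) (hττ : τ < τ') :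
    (1 + a * τ ^ 2 * μL) ^ (-(1 / τ ^ 2) : ℝ) < (1 + a * τ' ^ 2 * μL) ^ (-(1 / τ' ^ 2) : ℝ) := by
  have hτ' : 0 < τ' := hτ.trans hττ
  set x := a * τ ^ 2 * μL with hxdef
  set y := a * τ' ^ 2 * μL with hydef
  have hx : 0 < x := by positivity
  have hy : 0 < y := by positivity
  have hxy : x < y := by
    have : τ ^ 2 < τ' ^ 2 := by nlinarith
    rw [hxdef, hydef]; nlinarith
  have hlog := chordlog hx hxy
  -- x/y = τ²/τ'²
  have hratio : x / y = τ^2 / τ'^2 := by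
    rw [hxdef, hydef]
    rw [show a * τ^2 * μL = τ^2 * (a * μL) by ring, show a * τ'^2 * μL = τ'^2 * (a * μL) by ring,
      mul_div_mul_right _ _ (by positivity : (a * μL : ℝ) ≠ 0)]
  rw [hratio] at hlog
  -- so (1/τ'²) log(1+y) < (1/τ²) log(1+x)
  have hexp : -(1/τ^2) * Real.log (1 + x) < -(1/τ'^2) * Real.log (1 + y) := by
    have hτ2 : (0:ℝ) < τ^2 := by positivity
    have hτ'2 : (0:ℝ) < τ'^2 := by positivity
    have hmul := mul_lt_mul_of_pos_left hlog (show (0:ℝ) < 1/τ^2 by positivity)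
    have hcalc : (1/τ'^2) * Real.log (1+y) = (1/τ^2) * (τ^2/τ'^2 * Real.log (1+y)) := by
      field_simp
    nlinarith [hmul, hcalc]
  have hb1 : (0:ℝ) < 1 + x := by linarith
  have hb2 : (0:ℝ) < 1 + y := by linarith
  rw [Real.rpow_def_of_pos hb1, Real.rpow_def_of_pos hb2]
  exact Real.exp_lt_exp.2 (by rw [mul_comm, mul_comm (Real.log (1+y))]; exact hexp)

-- P antitone in a: for 0<x≤y, (1+y τ² μL)^(-1/τ²) ≤ (1+x τ² μL)^(-1/τ²)
lemma Panti {μL τ x y : ℝ} (hμL : 0 < μL) (hτ : 0 < τ) (hx : 0 < x) (hxy : x ≤ y) :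
    (1 + y * τ ^ 2 * μL) ^ (-(1 / τ ^ 2) : ℝ) ≤ (1 + x * τ ^ 2 * μL) ^ (-(1 / τ ^ 2) : ℝ) := by
  have hb1 : (0:ℝ) < 1 + x * τ^2 * μL := by positivity
  have hb2 : 1 + x * τ^2 * μL ≤ 1 + y * τ^2 * μL := by
    nlinarith [mul_nonneg (sub_nonneg.2 hxy) (le_of_lt (mul_pos (pow_pos hτ 2) hμL))]
  have hb2' : (0:ℝ) < 1 + y * τ^2 * μL := lt_of_lt_of_le hb1 hb2
  rw [Real.rpow_def_of_pos hb1, Real.rpow_def_of_pos hb2']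
  apply Real.exp_le_exp.2
  have hlog : Real.log (1 + x * τ^2 * μL) ≤ Real.log (1 + y * τ^2 * μL) :=
    Real.log_le_log hb1 hb2
  have : (0:ℝ) < 1/τ^2 := by positivity
  nlinarith

/-- The initial exponential growth rate `α` is strictly increasing in the coefficient of
variation `τ_L` of the latent period. -/
theorem growth_rate_increasing_in_cv_latent (μL μI τI R₀ τL τL' α α' : ℝ)
    (hμL : 0 < μL) (hμI : 0 < μI) (hτI : 0 < τI) (hR₀ : 0 < R₀)
    (hτL : 0 < τL) (hτL' : τL < τL') (hα : 0 < α) (hα' : 0 < α')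
    (hbal : α = (R₀ / μI) * (1 + α * τL ^ 2 * μL) ^ (-(1 / τL ^ 2) : ℝ)
        * (1 - (1 + α * τI ^ 2 * μI) ^ (-(1 / τI ^ 2) : ℝ)))
    (hbal' : α' = (R₀ / μI) * (1 + α' * τL' ^ 2 * μL) ^ (-(1 / τL' ^ 2) : ℝ)
        * (1 - (1 + α' * τI ^ 2 * μI) ^ (-(1 / τI ^ 2) : ℝ))) :
    α < α' := by
  by_contra hcon
  push_neg at hcon  -- α' ≤ α
  have hK : 0 < R₀ / μI := div_pos hR₀ hμI
  have hc : (0:ℝ) < τI^2 * μI := by positivity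
  have hs : (0:ℝ) < 1/τI^2 := by positivity
  -- abbreviations
  set K := R₀ / μI with hKdef
  set PL := (1 + α * τL^2 * μL) ^ (-(1/τL^2):ℝ) with hPL
  set PL' := (1 + α' * τL^2 * μL) ^ (-(1/τL^2):ℝ) with hPL'
  set PH' := (1 + α' * τL'^2 * μL) ^ (-(1/τL'^2):ℝ) with hPH'
  set QA := 1 - (1 + α * τI^2 * μI) ^ (-(1/τI^2):ℝ) with hQA
  set QB := 1 - (1 + α' * τI^2 * μI) ^ (-(1/τI^2):ℝ) with hQB
  -- positivity of QB
  have hQB : 0 < QB := by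
    have := Qpos (c := τI^2 * μI) (s := 1/τI^2) (a := α') hc hs hα'
    rwa [← mul_assoc] at this
  -- P strictly increasing in τ at α'
  have hP : PL' < PH' := Pmono hα' hμL hτL hτL'
  -- P antitone in a
  have hPa : PL ≤ PL' := Panti hμL hτL hα' hcon
  -- star-shape of Q
  have hQs : α' * QA ≤ α * QB := by
    have := Qstar (c := τI^2 * μI) (s := 1/τI^2) hc hs hα' hcon
    rwa [← mul_assoc, ← mul_assoc] at this
  have hPLpos : 0 < PL := Real.rpow_pos_of_pos (by positivity) _
  -- chain
  have h1 : K * PL' * QB < α' := by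
    rw [hbal']
    exact mul_lt_mul_of_pos_right (mul_lt_mul_of_pos_left hP hK) hQB
  have h2 : K * PL * QB < α' :=
    lt_of_le_of_lt (mul_le_mul_of_nonneg_right (mul_le_mul_of_nonneg_left hPa hK.le) hQB.le) h1
  have h3 : α * (K * PL * QB) < α * α' := mul_lt_mul_of_pos_left h2 hα
  have h4 : K * PL * (α' * QA) ≤ K * PL * (α * QB) :=
    mul_le_mul_of_nonneg_left hQs (by positivity)
  have h5 : α' * α = K * PL * (α' * QA) := by rw [hbal]; ring
  have h6 : K * PL * (α * QB) = α * (K * PL * QB) := by ring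
  have hfin : α' * α < α * α' := by
    calc α' * α = K * PL * (α' * QA) := h5
      _ ≤ K * PL * (α * QB) := h4
      _ = α * (K * PL * QB) := h6
      _ < α * α' := h3
  rw [mul_comm] at hfin
  exact lt_irrefl _ hfin
end

section
/- Let μ_L, μ_I, τ_L > 0 and R₀ > 0 be fixed, and let 0 < τ_I < τ_I'. If α > 0 satisfies α = (R₀/μ_I)(1 + α τ_L² μ_L)^(−1/τ_L²)(1 − (1 + α τ_I² μ_I)^(−1/τ_I²)) and α' > 0 satisfies the same equation with τ_I replaced by τ_I', then α' < α. In words: the initial exponential growth rate is strictly decreasing in the coefficient of variation τ_I of the infectious period — a more random infectious period decreases the growth rate. -/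
/-- For fixed `y > 0`, the map `s ↦ (1 + y s)^(-1/s)` is strictly increasing on `(0,∞)`. -/
lemma key_tau_mono (y s t : ℝ) (hy : 0 < y) (hs : 0 < s) (hst : s < t) :
    (1 + y * s) ^ (-(1 / s) : ℝ) < (1 + y * t) ^ (-(1 / t) : ℝ) := by
  have ht : 0 < t := hs.trans hst
  have hys : 0 < y * s := mul_pos hy hs
  have hyt : 0 < y * t := mul_pos hy ht
  have h1s : (0 : ℝ) < 1 + y * s := by linarith
  have h1t : (0 : ℝ) < 1 + y * t := by linarith
  have hp : 1 < t / s := (one_lt_div hs).2 hst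
  have hber : 1 + (t / s) * (y * s) < (1 + y * s) ^ (t / s : ℝ) :=
    one_add_mul_self_lt_rpow_one_add (by linarith) hys.ne' hp
  have h2 : 1 + y * t < (1 + y * s) ^ (t / s : ℝ) := by
    have : (t / s) * (y * s) = y * t := by field_simp
    rwa [this] at hber
  have h3 : (1 + y * t) ^ ((1 : ℝ) / t) < ((1 + y * s) ^ (t / s : ℝ)) ^ ((1 : ℝ) / t) :=
    Real.rpow_lt_rpow h1t.le h2 (by positivity)
  have h4 : ((1 + y * s) ^ (t / s : ℝ)) ^ ((1 : ℝ) / t) = (1 + y * s) ^ ((1 : ℝ) / s) := by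
    rw [← Real.rpow_mul h1s.le]
    congr 1
    field_simp
  rw [h4] at h3
  have hpos : (0 : ℝ) < (1 + y * t) ^ ((1 : ℝ) / t) := Real.rpow_pos_of_pos h1t _
  have h5 : ((1 + y * s) ^ ((1 : ℝ) / s))⁻¹ < ((1 + y * t) ^ ((1 : ℝ) / t))⁻¹ :=
    inv_strictAnti₀ hpos h3
  rwa [← Real.rpow_neg h1s.le, ← Real.rpow_neg h1t.le] at h5

/-- Concavity-type inequality: `x ↦ (1 - (1 + b x)^(-c))/x` is antitone on `(0,∞)`. -/
lemma key_ratio_anti (b c x y : ℝ) (hb : 0 < b) (hc : 0 < c) (hx : 0 < x) (hxy : x ≤ y) :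
    x * (1 - (1 + b * y) ^ (-c : ℝ)) ≤ y * (1 - (1 + b * x) ^ (-c : ℝ)) := by
  have hy : 0 < y := hx.trans_le hxy
  set r : ℝ := x / y with hr
  have hr0 : 0 < r := div_pos hx hy
  have hr1 : r ≤ 1 := (div_le_one hy).2 hxy
  set w : ℝ := 1 + b * y with hw
  have hw1 : 1 < w := by have := mul_pos hb hy; simp only [hw]; linarith
  have hw0 : 0 < w := lt_trans one_pos hw1
  have hxw : 1 + b * x = (1 - r) + r * w := by
    simp only [hr, hw]; field_simp; ring
  have hwc : 0 < w ^ (-c : ℝ) := Real.rpow_pos_of_pos hw0 _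
  -- AM-GM 1 : w ^ r ≤ (1 - r) + r * w
  have g1 : (1 : ℝ) ^ (1 - r) * w ^ r ≤ (1 - r) * 1 + r * w :=
    Real.geom_mean_le_arith_mean2_weighted (by linarith) hr0.le zero_le_one hw0.le (by ring)
  have g1' : w ^ r ≤ (1 - r) + r * w := by
    rwa [Real.one_rpow, one_mul, mul_one] at g1
  -- AM-GM 2 : (w ^ (-c)) ^ r ≤ (1 - r) + r * w ^ (-c)
  have g2 : (1 : ℝ) ^ (1 - r) * (w ^ (-c : ℝ)) ^ r ≤ (1 - r) * 1 + r * w ^ (-c : ℝ) :=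
    Real.geom_mean_le_arith_mean2_weighted (by linarith) hr0.le zero_le_one hwc.le (by ring)
  have g2' : (w ^ (-c : ℝ)) ^ r ≤ (1 - r) + r * w ^ (-c : ℝ) := by
    rwa [Real.one_rpow, one_mul, mul_one] at g2
  -- combine
  have hwr : 0 < w ^ (r : ℝ) := Real.rpow_pos_of_pos hw0 _
  have h5 : ((1 - r) + r * w) ^ (-c : ℝ) ≤ (w ^ (r : ℝ)) ^ (-c : ℝ) :=
    Real.rpow_le_rpow_of_nonpos hwr g1' (by linarith)
  have h6 : (w ^ (r : ℝ)) ^ (-c : ℝ) = (w ^ (-c : ℝ)) ^ r := by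
    rw [← Real.rpow_mul hw0.le, ← Real.rpow_mul hw0.le, mul_comm]
  have h7 : (1 + b * x) ^ (-c : ℝ) ≤ (1 - r) + r * w ^ (-c : ℝ) := by
    rw [hxw]
    exact le_trans h5 (by rw [h6]; exact g2')
  -- now conclude
  have hry : r * y = x := by rw [hr]; field_simp
  have : y * (1 - (1 + b * x) ^ (-c : ℝ)) ≥ y * (1 - ((1 - r) + r * w ^ (-c : ℝ))) := by
    apply mul_le_mul_of_nonneg_left (by linarith) hy.le
  calc x * (1 - (1 + b * y) ^ (-c : ℝ)) = y * (1 - ((1 - r) + r * w ^ (-c : ℝ))) := by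
        rw [← hry]; simp only [hw]; ring
    _ ≤ y * (1 - (1 + b * x) ^ (-c : ℝ)) := this

/-- The initial exponential growth rate `α` is strictly decreasing in the coefficient of
variation `τ_I` of the infectious period. -/
theorem growth_rate_decreasing_in_cv_infectious (μL μI τL R₀ τI τI' α α' : ℝ)
    (hμL : 0 < μL) (hμI : 0 < μI) (hτL : 0 < τL) (hR₀ : 0 < R₀)
    (hτI : 0 < τI) (hτI' : τI < τI') (hα : 0 < α) (hα' : 0 < α')
    (hbal : α = (R₀ / μI) * (1 + α * τL ^ 2 * μL) ^ (-(1 / τL ^ 2) : ℝ)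
        * (1 - (1 + α * τI ^ 2 * μI) ^ (-(1 / τI ^ 2) : ℝ)))
    (hbal' : α' = (R₀ / μI) * (1 + α' * τL ^ 2 * μL) ^ (-(1 / τL ^ 2) : ℝ)
        * (1 - (1 + α' * τI' ^ 2 * μI) ^ (-(1 / τI' ^ 2) : ℝ))) :
    α' < α := by
  by_contra hcon
  push_neg at hcon  -- hcon : α ≤ α'
  have hC : 0 < R₀ / μI := div_pos hR₀ hμI
  have hτI0 : 0 < τI ^ 2 := pow_pos hτI 2
  have hτI'0 : 0 < τI' ^ 2 := pow_pos (hτI.trans hτI') 2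
  have hτsq : τI ^ 2 < τI' ^ 2 := by nlinarith
  have hLpos : ∀ z : ℝ, 0 < z → (0 : ℝ) < 1 + z * τL ^ 2 * μL := by
    intro z hz; nlinarith [mul_pos (mul_pos hz (pow_pos hτL 2)) hμL]
  have hLa : (0 : ℝ) < 1 + α * τL ^ 2 * μL := hLpos α hα
  have hLa' : (0 : ℝ) < 1 + α' * τL ^ 2 * μL := hLpos α' hα'
  -- latent factor is antitone
  have hLanti : (1 + α' * τL ^ 2 * μL) ^ (-(1 / τL ^ 2) : ℝ)
      ≤ (1 + α * τL ^ 2 * μL) ^ (-(1 / τL ^ 2) : ℝ) := by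
    refine Real.rpow_le_rpow_of_nonpos hLa ?_ (neg_nonpos.mpr (by positivity))
    nlinarith [mul_le_mul_of_nonneg_right (mul_le_mul_of_nonneg_right hcon (pow_pos hτL 2).le) hμL.le]
  have hLa'pos : (0 : ℝ) < (1 + α' * τL ^ 2 * μL) ^ (-(1 / τL ^ 2) : ℝ) :=
    Real.rpow_pos_of_pos hLa' _
  have hLapos : (0 : ℝ) < (1 + α * τL ^ 2 * μL) ^ (-(1 / τL ^ 2) : ℝ) :=
    Real.rpow_pos_of_pos hLa _
  -- step 1: the infectious factor at α' with τI' is smaller than with τI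
  have hstep1 : (1 + α' * τI ^ 2 * μI) ^ (-(1 / τI ^ 2) : ℝ)
      < (1 + α' * τI' ^ 2 * μI) ^ (-(1 / τI' ^ 2) : ℝ) := by
    have := key_tau_mono (α' * μI) (τI ^ 2) (τI' ^ 2) (mul_pos hα' hμI) hτI0 hτsq
    have e1 : α' * μI * τI ^ 2 = α' * τI ^ 2 * μI := by ring
    have e2 : α' * μI * τI' ^ 2 = α' * τI' ^ 2 * μI := by ring
    rwa [e1, e2] at this
  -- hence α' < (R₀/μI) L(α') ψ₁(α')
  have hstep2 : α' < (R₀ / μI) * (1 + α' * τL ^ 2 * μL) ^ (-(1 / τL ^ 2) : ℝ)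
      * (1 - (1 + α' * τI ^ 2 * μI) ^ (-(1 / τI ^ 2) : ℝ)) := by
    conv_lhs => rw [hbal']
    apply mul_lt_mul_of_pos_left _ (by positivity)
    linarith
  -- ratio antitonicity at τI between α and α'
  have hstep3 : α * (1 - (1 + α' * τI ^ 2 * μI) ^ (-(1 / τI ^ 2) : ℝ))
      ≤ α' * (1 - (1 + α * τI ^ 2 * μI) ^ (-(1 / τI ^ 2) : ℝ)) := by
    have := key_ratio_anti (τI ^ 2 * μI) (1 / τI ^ 2) α α' (by positivity) (by positivity)
      hα hcon
    have e1 : τI ^ 2 * μI * α' = α' * τI ^ 2 * μI := by ring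
    have e2 : τI ^ 2 * μI * α = α * τI ^ 2 * μI := by ring
    rwa [e1, e2] at this
  -- positivity of the infectious factor at α'
  have hψpos : 0 < 1 - (1 + α' * τI ^ 2 * μI) ^ (-(1 / τI ^ 2) : ℝ) := by
    have hgt : 1 < 1 + α' * τI ^ 2 * μI := by nlinarith [mul_pos (mul_pos hα' hτI0) hμI]
    have := Real.rpow_lt_one_of_one_lt_of_neg hgt (z := (-(1 / τI ^ 2) : ℝ))
      (neg_neg_of_pos (by positivity))
    linarith
  -- combine everything
  set C := R₀ / μI
  set La := (1 + α * τL ^ 2 * μL) ^ (-(1 / τL ^ 2) : ℝ)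
  set La' := (1 + α' * τL ^ 2 * μL) ^ (-(1 / τL ^ 2) : ℝ)
  set ψa := 1 - (1 + α * τI ^ 2 * μI) ^ (-(1 / τI ^ 2) : ℝ)
  set ψa' := 1 - (1 + α' * τI ^ 2 * μI) ^ (-(1 / τI ^ 2) : ℝ)
  -- hbal : α = C * La * ψa ; hstep2 : α' < C * La' * ψa' ; hstep3 : α * ψa' ≤ α' * ψa
  have h1 : α * α' < α * (C * La' * ψa') := by
    apply mul_lt_mul_of_pos_left hstep2 hα
  have h2 : α * (C * La' * ψa') ≤ α * (C * La * ψa') := by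
    apply mul_le_mul_of_nonneg_left _ hα.le
    apply mul_le_mul_of_nonneg_right _ hψpos.le
    exact mul_le_mul_of_nonneg_left hLanti hC.le
  have h3 : α * (C * La * ψa') = (C * La) * (α * ψa') := by ring
  have h4 : (C * La) * (α * ψa') ≤ (C * La) * (α' * ψa) := by
    apply mul_le_mul_of_nonneg_left hstep3 (by positivity)
  have h5 : (C * La) * (α' * ψa) = α' * (C * La * ψa) := by ring
  rw [← hbal] at h5
  nlinarith [h1, h2, h3, h4, h5]
end
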